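/- Let p > 3 be prime, and suppose λ ∈ ℚ_p satisfies |16λ - 16 - 3a·p^(2n)|_p < p^(-2n) for some n ≥ 1 and some quadratic residue a mod p (1 ≤ a ≤ p-1, a ≡ b² mod p for some b ≢ 0). If s ∈ ℚ_p with s² = λ(λ+8) and |s - 3|_p < 1, then 2(λ - 4 + s) is a square in ℚ_p. -/

import Mathlib

open Polynomial

lemma padic_nat_norm_one (p : ℕ) [Fact p.Prime] {k : ℕ} (hk : ¬ p ∣ k) :
    ‖(k : ℚ_[p])‖ = 1 := by
  refine le_antisymm ?_ ?_
  · simpa using Padic.norm_int_le_one (p := p) (k : ℤ)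
  · by_contra h
    push_neg at h
    have : ‖((k : ℤ) : ℚ_[p])‖ < 1 := by simpa using h
    rw [Padic.norm_intCast_lt_one_iff] at this
    exact hk (Int.ofNat_dvd.mp this)

lemma padic_sq_of_close (p : ℕ) [Fact p.Prime] (hp2 : ¬ p ∣ 2) (c y : ℤ_[p])
    (hc : ‖c‖ = 1) (h : ‖y - c ^ 2‖ < 1) : ∃ z : ℤ_[p], z ^ 2 = y := by
  have h2 : ‖(2 : ℤ_[p])‖ = 1 := by
    refine le_antisymm (PadicInt.norm_le_one _) ?_
    by_contra hlt
    push_neg at hlt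
    have : ‖((2 : ℤ) : ℤ_[p])‖ < 1 := by simpa using hlt
    rw [PadicInt.norm_int_lt_one_iff_dvd] at this
    exact hp2 (Int.ofNat_dvd.mp (by exact_mod_cast this))
  have hd : (X ^ 2 - C y : Polynomial ℤ_[p]).derivative = C 2 * X := by
    simp [derivative_X_pow]; rw [map_ofNat C 2]; norm_num
  have hnorm : ‖(X ^ 2 - C y : Polynomial ℤ_[p]).eval c‖ <
      ‖(X ^ 2 - C y : Polynomial ℤ_[p]).derivative.eval c‖ ^ 2 := by
    rw [hd]
    have : ‖(2 : ℤ_[p]) * c‖ = 1 := by rw [norm_mul, h2, hc, one_mul]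
    simp only [eval_mul, eval_C, eval_X, eval_sub, eval_pow, this, one_pow]
    calc ‖c ^ 2 - y‖ = ‖y - c ^ 2‖ := norm_sub_rev _ _
      _ < 1 := h
  obtain ⟨z, hz, -⟩ := hensels_lemma hnorm
  refine ⟨z, ?_⟩
  simpa [sub_eq_zero] using hz

theorem stmt8 (p : ℕ) [Fact p.Prime] (hp : 3 < p) (l s : ℚ_[p]) (n a : ℕ)
    (hn : 1 ≤ n) (ha1 : 1 ≤ a) (ha2 : a ≤ p - 1)
    (haQR : ∃ b : ℕ, ¬ (p ∣ b) ∧ (a : ZMod p) = (b : ZMod p) ^ 2)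
    (hl : ‖16 * l - 16 - 3 * (a : ℚ_[p]) * (p : ℚ_[p]) ^ (2 * n)‖ < (p : ℝ) ^ (-(2 * (n : ℤ))))
    (hs : s ^ 2 = l * (l + 8)) (hs3 : ‖s - 3‖ < 1) :
    ∃ q : ℚ_[p], q ^ 2 = 2 * (l - 4 + s) := by
  obtain ⟨b, hb, hab⟩ := haQR
  have hprime : p.Prime := Fact.out
  have hp2 : ¬ p ∣ 2 := fun h => by have := Nat.le_of_dvd (by norm_num) h; omega
  have hp3 : ¬ p ∣ 3 := fun h => by have := Nat.le_of_dvd (by norm_num) h; omega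
  have hp6 : ¬ p ∣ 6 := fun h => (hprime.dvd_mul.mp (show p ∣ 2 * 3 from by norm_num [h])).elim hp2 hp3
  have hp16 : ¬ p ∣ 16 := fun h => by
    have h4 : p ∣ 2 ^ 4 := by norm_num; exact h
    exact hp2 (hprime.dvd_of_dvd_pow h4)
  have h2 : ‖(2 : ℚ_[p])‖ = 1 := by simpa using padic_nat_norm_one p hp2
  have h6 : ‖(6 : ℚ_[p])‖ = 1 := by simpa using padic_nat_norm_one p hp6
  have h16 : ‖(16 : ℚ_[p])‖ = 1 := by simpa using padic_nat_norm_one p hp16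
  set t : ℚ_[p] := l - 1 with ht
  set u : ℚ_[p] := s - 3 with hu
  have key : u * (u + 6) = t * (t + 10) := by
    rw [ht, hu]; linear_combination hs
  -- norm of p^(2n)
  have hppow : ‖(p : ℚ_[p]) ^ (2 * n)‖ = (p : ℝ) ^ (-(2 * (n : ℤ))) := by
    rw [Padic.norm_p_pow]; norm_num
  have hP0 : (0 : ℝ) < (p : ℝ) ^ (-(2 * (n : ℤ))) := by positivity
  -- ‖t‖ ≤ p^(-2n)
  have hlt' : ‖16 * t - 3 * (a : ℚ_[p]) * (p : ℚ_[p]) ^ (2 * n)‖ < (p : ℝ) ^ (-(2 * (n : ℤ))) := by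
    have : 16 * t - 3 * (a : ℚ_[p]) * (p : ℚ_[p]) ^ (2 * n)
        = 16 * l - 16 - 3 * (a : ℚ_[p]) * (p : ℚ_[p]) ^ (2 * n) := by rw [ht]; ring
    rw [this]; exact hl
  have h3a : ‖3 * (a : ℚ_[p]) * (p : ℚ_[p]) ^ (2 * n)‖ = (p : ℝ) ^ (-(2 * (n : ℤ))) := by
    have hpa : ¬ p ∣ a := fun h => by have := Nat.le_of_dvd (by omega) h; omega
    have h3' : ‖(3 : ℚ_[p]) * (a : ℚ_[p])‖ = 1 := by
      have : ((3 * a : ℕ) : ℚ_[p]) = 3 * (a : ℚ_[p]) := by push_cast; ring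
      rw [← this, padic_nat_norm_one p (fun h => (hprime.dvd_mul.mp h).elim hp3 hpa)]
    rw [norm_mul, h3', one_mul, hppow]
  have hT : ‖t‖ ≤ (p : ℝ) ^ (-(2 * (n : ℤ))) := by
    have : ‖16 * t‖ ≤ (p : ℝ) ^ (-(2 * (n : ℤ))) := by
      have := Padic.nonarchimedean (16 * t - 3 * (a : ℚ_[p]) * (p : ℚ_[p]) ^ (2 * n))
        (3 * (a : ℚ_[p]) * (p : ℚ_[p]) ^ (2 * n))
      simp only [sub_add_cancel] at this
      refine this.trans (max_le hlt'.le h3a.le)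
    rwa [norm_mul, h16, one_mul] at this
  -- ‖u+6‖ = 1
  have hu6 : ‖u + 6‖ = 1 := by
    rw [Padic.add_eq_max_of_ne (by rw [h6]; exact ne_of_lt hs3)]
    rw [h6]; exact max_eq_right hs3.le
  have hU : ‖u‖ ≤ (p : ℝ) ^ (-(2 * (n : ℤ))) := by
    have hk := congrArg norm key
    rw [norm_mul, norm_mul, hu6, mul_one] at hk
    rw [hk]
    have : ‖t + 10‖ ≤ 1 := by
      refine (Padic.nonarchimedean t 10).trans (max_le ?_ ?_)
      · exact hT.trans (by
          refine zpow_le_one_of_nonpos₀ (by exact_mod_cast hprime.one_le) (by omega))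
      · simpa using Padic.norm_int_le_one (p := p) (10 : ℤ)
    calc ‖t‖ * ‖t + 10‖ ≤ ‖t‖ * 1 := by
          exact mul_le_mul_of_nonneg_left this (norm_nonneg t)
      _ ≤ (p : ℝ) ^ (-(2 * (n : ℤ))) := by rwa [mul_one]
  set x : ℚ_[p] := 2 * (l - 4 + s) with hxdef
  have hx2 : x = 2 * (t + u) := by rw [hxdef, ht, hu]; ring
  have hX : ‖x‖ ≤ (p : ℝ) ^ (-(2 * (n : ℤ))) := by
    rw [hx2, norm_mul, h2, one_mul]
    exact (Padic.nonarchimedean t u).trans (max_le hT hU)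
  -- key identity
  have hid : 6 * x - 6 * (a : ℚ_[p]) * (p : ℚ_[p]) ^ (2 * n)
      = 2 * (16 * t - 3 * (a : ℚ_[p]) * (p : ℚ_[p]) ^ (2 * n)) + 2 * t * u + 2 * t ^ 2 - x * u := by
    rw [hx2]; linear_combination 2 * key
  have hsmall : ∀ v w : ℚ_[p], ‖v‖ ≤ (p : ℝ) ^ (-(2 * (n : ℤ))) →
      ‖w‖ ≤ (p : ℝ) ^ (-(2 * (n : ℤ))) → ‖v * w‖ ≤ (p : ℝ) ^ (-(2 * (n : ℤ)) - 1) := by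
    intro v w hv hw
    rw [norm_mul]
    calc ‖v‖ * ‖w‖ ≤ (p : ℝ) ^ (-(2 * (n : ℤ))) * (p : ℝ) ^ (-(2 * (n : ℤ))) :=
          mul_le_mul hv hw (norm_nonneg _) hP0.le
      _ = (p : ℝ) ^ (-(2 * (n : ℤ)) + -(2 * (n : ℤ))) := by rw [← zpow_add₀ (by positivity)]
      _ ≤ (p : ℝ) ^ (-(2 * (n : ℤ)) - 1) := by
          apply zpow_le_zpow_right₀ (by exact_mod_cast hprime.one_lt.le) (by omega)
  have hmain : ‖x - (a : ℚ_[p]) * (p : ℚ_[p]) ^ (2 * n)‖ ≤ (p : ℝ) ^ (-(2 * (n : ℤ)) - 1) := by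
    have h6eq : ‖6 * x - 6 * (a : ℚ_[p]) * (p : ℚ_[p]) ^ (2 * n)‖
        = ‖x - (a : ℚ_[p]) * (p : ℚ_[p]) ^ (2 * n)‖ := by
      have : 6 * x - 6 * (a : ℚ_[p]) * (p : ℚ_[p]) ^ (2 * n)
          = 6 * (x - (a : ℚ_[p]) * (p : ℚ_[p]) ^ (2 * n)) := by ring
      rw [this, norm_mul, h6, one_mul]
    rw [← h6eq, hid]
    have e1 : ‖2 * (16 * t - 3 * (a : ℚ_[p]) * (p : ℚ_[p]) ^ (2 * n))‖
        ≤ (p : ℝ) ^ (-(2 * (n : ℤ)) - 1) := by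
      rw [norm_mul, h2, one_mul]
      rwa [Padic.norm_lt_pow_iff_norm_le_pow_sub_one] at hlt'
    have e2 : ‖2 * t * u‖ ≤ (p : ℝ) ^ (-(2 * (n : ℤ)) - 1) := by
      have := hsmall t u hT hU
      rw [mul_assoc, norm_mul, h2, one_mul]; exact this
    have e3 : ‖2 * t ^ 2‖ ≤ (p : ℝ) ^ (-(2 * (n : ℤ)) - 1) := by
      have := hsmall t t hT hT
      rw [norm_mul, h2, one_mul, sq]; rwa [norm_mul] at this ⊢
    have e4 : ‖x * u‖ ≤ (p : ℝ) ^ (-(2 * (n : ℤ)) - 1) := hsmall x u hX hU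
    calc ‖2 * (16 * t - 3 * (a : ℚ_[p]) * (p : ℚ_[p]) ^ (2 * n)) + 2 * t * u + 2 * t ^ 2 - x * u‖
        ≤ max ‖2 * (16 * t - 3 * (a : ℚ_[p]) * (p : ℚ_[p]) ^ (2 * n)) + 2 * t * u + 2 * t ^ 2‖
            ‖-(x * u)‖ := by
          rw [sub_eq_add_neg]; exact Padic.nonarchimedean _ _
      _ ≤ _ := by
          rw [norm_neg]
          refine max_le ?_ e4
          refine (Padic.nonarchimedean _ _).trans (max_le ?_ e3)
          exact (Padic.nonarchimedean _ _).trans (max_le e1 e2)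
  -- pass to y = x / p^(2n)
  have hpne : ((p : ℚ_[p]) ^ (2 * n)) ≠ 0 := by
    apply pow_ne_zero
    exact_mod_cast (Nat.cast_ne_zero (R := ℚ_[p])).mpr hprime.ne_zero
  set y : ℚ_[p] := x / (p : ℚ_[p]) ^ (2 * n) with hydef
  have hyx : x = (p : ℚ_[p]) ^ (2 * n) * y := by rw [hydef]; field_simp
  have hya : ‖y - (a : ℚ_[p])‖ ≤ (p : ℝ) ^ (-1 : ℤ) := by
    have : ‖(p : ℚ_[p]) ^ (2 * n) * (y - (a : ℚ_[p]))‖ ≤ (p : ℝ) ^ (-(2 * (n : ℤ)) - 1) := by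
      have heq : (p : ℚ_[p]) ^ (2 * n) * (y - (a : ℚ_[p]))
          = x - (a : ℚ_[p]) * (p : ℚ_[p]) ^ (2 * n) := by rw [hyx]; ring
      rw [heq]; exact hmain
    rw [norm_mul, hppow] at this
    calc ‖y - (a : ℚ_[p])‖
        = (p : ℝ) ^ (2 * (n : ℤ)) * ((p : ℝ) ^ (-(2 * (n : ℤ))) * ‖y - (a : ℚ_[p])‖) := by
          rw [← mul_assoc, ← zpow_add₀ (by positivity : (p:ℝ) ≠ 0)]; simp
      _ ≤ (p : ℝ) ^ (2 * (n : ℤ)) * (p : ℝ) ^ (-(2 * (n : ℤ)) - 1) :=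
          mul_le_mul_of_nonneg_left this (by positivity)
      _ = (p : ℝ) ^ (-1 : ℤ) := by
          rw [← zpow_add₀ (by positivity : (p:ℝ) ≠ 0)]; ring_nf
  have hyb : ‖y - (b : ℚ_[p]) ^ 2‖ < 1 := by
    have hab' : ((p : ℤ)) ∣ ((a : ℤ) - (b : ℤ) ^ 2) := by
      have : (((a : ℤ) - (b : ℤ) ^ 2 : ℤ) : ZMod p) = 0 := by push_cast [hab]; ring
      exact_mod_cast (ZMod.intCast_zmod_eq_zero_iff_dvd _ _).mp this
    have habn : ‖(a : ℚ_[p]) - (b : ℚ_[p]) ^ 2‖ < 1 := by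
      have : (((a : ℤ) - (b : ℤ) ^ 2 : ℤ) : ℚ_[p]) = (a : ℚ_[p]) - (b : ℚ_[p]) ^ 2 := by push_cast; ring
      rw [← this, Padic.norm_intCast_lt_one_iff]; exact hab'
    have : y - (b : ℚ_[p]) ^ 2 = (y - (a : ℚ_[p])) + ((a : ℚ_[p]) - (b : ℚ_[p]) ^ 2) := by ring
    rw [this]
    refine lt_of_le_of_lt (Padic.nonarchimedean _ _) (max_lt (lt_of_le_of_lt hya ?_) habn)
    have : (1:ℝ) = (p:ℝ) ^ (0:ℤ) := by simp
    rw [this]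
    exact zpow_lt_zpow_right₀ (by exact_mod_cast hprime.one_lt) (by norm_num)
  have hbnorm : ‖(b : ℚ_[p])‖ = 1 := padic_nat_norm_one p hb
  have hynorm : ‖y‖ ≤ 1 := by
    have : y = (y - (b : ℚ_[p]) ^ 2) + (b : ℚ_[p]) ^ 2 := by ring
    rw [this]
    refine (Padic.nonarchimedean _ _).trans (max_le hyb.le ?_)
    rw [pow_two, norm_mul, hbnorm]; norm_num
  -- lift to ℤ_[p]
  set Y : ℤ_[p] := ⟨y, hynorm⟩ with hY
  have hbint : ‖(b : ℤ_[p])‖ = 1 := by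
    rw [PadicInt.norm_def]; rw [PadicInt.coe_natCast]; exact hbnorm
  have hclose : ‖Y - (b : ℤ_[p]) ^ 2‖ < 1 := by
    rw [PadicInt.norm_def]
    push_cast [hY]
    convert hyb using 2
    change ((Y - (b : ℤ_[p]) ^ 2 : ℤ_[p]) : ℚ_[p]) = _
    rw [PadicInt.coe_sub, PadicInt.coe_pow, PadicInt.coe_natCast, hY]
  obtain ⟨z, hz⟩ := padic_sq_of_close p hp2 (b : ℤ_[p]) Y hbint hclose
  refine ⟨(p : ℚ_[p]) ^ n * (z : ℚ_[p]), ?_⟩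
  have hz' : (z : ℚ_[p]) ^ 2 = y := by
    have := congrArg (fun w : ℤ_[p] => (w : ℚ_[p])) hz
    push_cast at this
    simpa [hY] using this
  calc ((p : ℚ_[p]) ^ n * (z : ℚ_[p])) ^ 2 = (p : ℚ_[p]) ^ (2 * n) * (z : ℚ_[p]) ^ 2 := by
        rw [mul_pow, ← pow_mul]; ring_nf
    _ = (p : ℚ_[p]) ^ (2 * n) * y := by rw [hz']
    _ = 2 * (l - 4 + s) := by rw [← hyx, hxdef]
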